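/- Let x range over ℝ³ and let y₁, y₂, z₁, z₂ ∈ ℝ³ satisfy ‖z₁‖ = ‖z₂‖ = 1, z₁ ≠ z₂, z₁ ≠ −z₂, ⟨z₁, y₁⟩ = 0, and ⟨z₂, y₂⟩ = 0. Then the system of equations z₁ ×₃ x = y₁ and z₂ ×₃ x = y₂ has a solution x ∈ ℝ³ if and only if ⟨z₁ ×₃ y₁ − z₂ ×₃ y₂, z₁ ×₃ z₂⟩ = 0. -/

import Mathlib

open scoped RealInnerProductSpace

noncomputable section

abbrev E3 := EuclideanSpace ℝ (Fin 3)

/-- The cross product on `ℝ³`. -/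
def cross3 (x y : E3) : E3 :=
  (EuclideanSpace.equiv (Fin 3) ℝ).symm
    ![x 1 * y 2 - x 2 * y 1, x 2 * y 0 - x 0 * y 2, x 0 * y 1 - x 1 * y 0]


lemma inner3 (a b : E3) : ⟪a,b⟫ = a 0 * b 0 + a 1 * b 1 + a 2 * b 2 := by
  simp [PiLp.inner_apply, Fin.sum_univ_three]
  ring

lemma cross3_0 (a b : E3) : cross3 a b 0 = a 1 * b 2 - a 2 * b 1 := rfl
lemma cross3_1 (a b : E3) : cross3 a b 1 = a 2 * b 0 - a 0 * b 2 := rfl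
lemma cross3_2 (a b : E3) : cross3 a b 2 = a 0 * b 1 - a 1 * b 0 := rfl


lemma key (a0 a1 a2 b0 b1 b2 p0 p1 p2 q0 q1 q2 : ℝ)
    (hA : a0^2 + a1^2 + a2^2 = 1) (hB : b0^2 + b1^2 + b2^2 = 1)
    (hP : a0*p0 + a1*p1 + a2*p2 = 0) (hQ : b0*q0 + b1*q1 + b2*q2 = 0)
    (hc1 : a0*b0 + a1*b1 + a2*b2 < 1) (hc2 : -1 < a0*b0 + a1*b1 + a2*b2)
    (hH : ((a1*p2 - a2*p1) - (b1*q2 - b2*q1)) * (a1*b2 - a2*b1) + ((a2*p0 - a0*p2) - (b2*q0 - b0*q2)) * (a2*b0 - a0*b2) + ((a0*p1 - a1*p0) - (b0*q1 - b1*q0)) * (a0*b1 - a1*b0) = 0) :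
    ∃ x0 x1 x2 : ℝ,
      (a1*x2 - a2*x1 = p0 ∧ a2*x0 - a0*x2 = p1 ∧ a0*x1 - a1*x0 = p2) ∧
      (b1*x2 - b2*x1 = q0 ∧ b2*x0 - b0*x2 = q1 ∧ b0*x1 - b1*x0 = q2) := by
  have hnveq : ((b1*a2 - b2*a1)^2 + (b2*a0 - b0*a2)^2 + (b0*a1 - b1*a0)^2) = 1 - (a0*b0 + a1*b1 + a2*b2)^2 := by
    linear_combination (b0^2 + b1^2 + b2^2) * hA + hB
  have hnv0 : ((b1*a2 - b2*a1)^2 + (b2*a0 - b0*a2)^2 + (b0*a1 - b1*a0)^2) ≠ 0 := by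
    have : (0:ℝ) < ((b1*a2 - b2*a1)^2 + (b2*a0 - b0*a2)^2 + (b0*a1 - b1*a0)^2) := by rw [hnveq]; nlinarith [hc1, hc2]
    exact ne_of_gt this
  have hS : (p0*b0 + p1*b1 + p2*b2) + (q0*a0 + q1*a1 + q2*a2) = 0 := by
    linear_combination hH - (p0*b0 + p1*b1 + p2*b2) * hA - (q0*a0 + q1*a1 + q2*a2) * hB + (a0*b0 + a1*b1 + a2*b2) * hP + (a0*b0 + a1*b1 + a2*b2) * hQ
  have hwa : (q0 - (b1*(p0*a1 - p1*a0) - b2*(p2*a0 - p0*a2)))*a0 + (q1 - (b2*(p1*a2 - p2*a1) - b0*(p0*a1 - p1*a0)))*a1 + (q2 - (b0*(p2*a0 - p0*a2) - b1*(p1*a2 - p2*a1)))*a2 = 0 := by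
    linear_combination hS + (p0*b0 + p1*b1 + p2*b2) * hA - (a0*b0 + a1*b1 + a2*b2) * hP
  have hwb : (q0 - (b1*(p0*a1 - p1*a0) - b2*(p2*a0 - p0*a2)))*b0 + (q1 - (b2*(p1*a2 - p2*a1) - b0*(p0*a1 - p1*a0)))*b1 + (q2 - (b0*(p2*a0 - p0*a2) - b1*(p1*a2 - p2*a1)))*b2 = 0 := by
    linear_combination hQ
  have hwv0 : (q1 - (b2*(p1*a2 - p2*a1) - b0*(p0*a1 - p1*a0)))*(b0*a1 - b1*a0) - (q2 - (b0*(p2*a0 - p0*a2) - b1*(p1*a2 - p2*a1)))*(b2*a0 - b0*a2) = 0 := by linear_combination b0 * hwa - a0 * hwb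
  have hwv1 : (q2 - (b0*(p2*a0 - p0*a2) - b1*(p1*a2 - p2*a1)))*(b1*a2 - b2*a1) - (q0 - (b1*(p0*a1 - p1*a0) - b2*(p2*a0 - p0*a2)))*(b0*a1 - b1*a0) = 0 := by linear_combination b1 * hwa - a1 * hwb
  have hwv2 : (q0 - (b1*(p0*a1 - p1*a0) - b2*(p2*a0 - p0*a2)))*(b2*a0 - b0*a2) - (q1 - (b2*(p1*a2 - p2*a1) - b0*(p0*a1 - p1*a0)))*(b1*a2 - b2*a1) = 0 := by linear_combination b2 * hwa - a2 * hwb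
  have htv0 : (((q0 - (b1*(p0*a1 - p1*a0) - b2*(p2*a0 - p0*a2)))*(b1*a2 - b2*a1) + (q1 - (b2*(p1*a2 - p2*a1) - b0*(p0*a1 - p1*a0)))*(b2*a0 - b0*a2) + (q2 - (b0*(p2*a0 - p0*a2) - b1*(p1*a2 - p2*a1)))*(b0*a1 - b1*a0)) / ((b1*a2 - b2*a1)^2 + (b2*a0 - b0*a2)^2 + (b0*a1 - b1*a0)^2)) * (b1*a2 - b2*a1) = (q0 - (b1*(p0*a1 - p1*a0) - b2*(p2*a0 - p0*a2))) := by
    rw [div_mul_eq_mul_div, div_eq_iff hnv0]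
    linear_combination (b0*a1 - b1*a0) * hwv1 - (b2*a0 - b0*a2) * hwv2
  have htv1 : (((q0 - (b1*(p0*a1 - p1*a0) - b2*(p2*a0 - p0*a2)))*(b1*a2 - b2*a1) + (q1 - (b2*(p1*a2 - p2*a1) - b0*(p0*a1 - p1*a0)))*(b2*a0 - b0*a2) + (q2 - (b0*(p2*a0 - p0*a2) - b1*(p1*a2 - p2*a1)))*(b0*a1 - b1*a0)) / ((b1*a2 - b2*a1)^2 + (b2*a0 - b0*a2)^2 + (b0*a1 - b1*a0)^2)) * (b2*a0 - b0*a2) = (q1 - (b2*(p1*a2 - p2*a1) - b0*(p0*a1 - p1*a0))) := by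
    rw [div_mul_eq_mul_div, div_eq_iff hnv0]
    linear_combination (b1*a2 - b2*a1) * hwv2 - (b0*a1 - b1*a0) * hwv0
  have htv2 : (((q0 - (b1*(p0*a1 - p1*a0) - b2*(p2*a0 - p0*a2)))*(b1*a2 - b2*a1) + (q1 - (b2*(p1*a2 - p2*a1) - b0*(p0*a1 - p1*a0)))*(b2*a0 - b0*a2) + (q2 - (b0*(p2*a0 - p0*a2) - b1*(p1*a2 - p2*a1)))*(b0*a1 - b1*a0)) / ((b1*a2 - b2*a1)^2 + (b2*a0 - b0*a2)^2 + (b0*a1 - b1*a0)^2)) * (b0*a1 - b1*a0) = (q2 - (b0*(p2*a0 - p0*a2) - b1*(p1*a2 - p2*a1))) := by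
    rw [div_mul_eq_mul_div, div_eq_iff hnv0]
    linear_combination (b2*a0 - b0*a2) * hwv0 - (b1*a2 - b2*a1) * hwv1
  refine ⟨((p1*a2 - p2*a1) + (((q0 - (b1*(p0*a1 - p1*a0) - b2*(p2*a0 - p0*a2)))*(b1*a2 - b2*a1) + (q1 - (b2*(p1*a2 - p2*a1) - b0*(p0*a1 - p1*a0)))*(b2*a0 - b0*a2) + (q2 - (b0*(p2*a0 - p0*a2) - b1*(p1*a2 - p2*a1)))*(b0*a1 - b1*a0)) / ((b1*a2 - b2*a1)^2 + (b2*a0 - b0*a2)^2 + (b0*a1 - b1*a0)^2))*a0), ((p2*a0 - p0*a2) + (((q0 - (b1*(p0*a1 - p1*a0) - b2*(p2*a0 - p0*a2)))*(b1*a2 - b2*a1) + (q1 - (b2*(p1*a2 - p2*a1) - b0*(p0*a1 - p1*a0)))*(b2*a0 - b0*a2) + (q2 - (b0*(p2*a0 - p0*a2) - b1*(p1*a2 - p2*a1)))*(b0*a1 - b1*a0)) / ((b1*a2 - b2*a1)^2 + (b2*a0 - b0*a2)^2 + (b0*a1 - b1*a0)^2))*a1), ((p0*a1 - p1*a0) +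 (((q0 - (b1*(p0*a1 - p1*a0) - b2*(p2*a0 - p0*a2)))*(b1*a2 - b2*a1) + (q1 - (b2*(p1*a2 - p2*a1) - b0*(p0*a1 - p1*a0)))*(b2*a0 - b0*a2) + (q2 - (b0*(p2*a0 - p0*a2) - b1*(p1*a2 - p2*a1)))*(b0*a1 - b1*a0)) / ((b1*a2 - b2*a1)^2 + (b2*a0 - b0*a2)^2 + (b0*a1 - b1*a0)^2))*a2), ⟨?_, ?_, ?_⟩, ⟨?_, ?_, ?_⟩⟩
  · linear_combination p0 * hA - a0 * hP
  · linear_combination p1 * hA - a1 * hP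
  · linear_combination p2 * hA - a2 * hP
  · linear_combination htv0
  · linear_combination htv1
  · linear_combination htv2


/-- Lemma 1: the system `z₁ × x = y₁`, `z₂ × x = y₂` (with `z₁, z₂` unit vectors,
`z₁ ≠ ±z₂`, `z₁ ⊥ y₁`, `z₂ ⊥ y₂`) has a solution `x` iff
`⟨z₁ × y₁ − z₂ × y₂, z₁ × z₂⟩ = 0`. -/
theorem cross_system_solvable_iff
    (y₁ y₂ z₁ z₂ : E3)
    (hz₁ : ‖z₁‖ = 1) (hz₂ : ‖z₂‖ = 1)
    (hne : z₁ ≠ z₂) (hne' : z₁ ≠ -z₂)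
    (hy₁ : ⟪z₁, y₁⟫ = 0) (hy₂ : ⟪z₂, y₂⟫ = 0) :
    (∃ x : E3, cross3 z₁ x = y₁ ∧ cross3 z₂ x = y₂) ↔
      ⟪cross3 z₁ y₁ - cross3 z₂ y₂, cross3 z₁ z₂⟫ = 0 := by
  have hA : (z₁ 0)^2 + (z₁ 1)^2 + (z₁ 2)^2 = 1 := by
    have h : ⟪z₁, z₁⟫ = 1 := by rw [real_inner_self_eq_norm_sq, hz₁]; norm_num
    rw [inner3] at h; linear_combination h
  have hB : (z₂ 0)^2 + (z₂ 1)^2 + (z₂ 2)^2 = 1 := by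
    have h : ⟪z₂, z₂⟫ = 1 := by rw [real_inner_self_eq_norm_sq, hz₂]; norm_num
    rw [inner3] at h; linear_combination h
  constructor
  · rintro ⟨x, rfl, rfl⟩
    rw [inner3]
    simp only [PiLp.sub_apply, cross3_0, cross3_1, cross3_2]
    linear_combination
      ((x 0) * ((z₁ 1) * (z₂ 2) - (z₁ 2) * (z₂ 1)) +
       (x 1) * ((z₁ 2) * (z₂ 0) - (z₁ 0) * (z₂ 2)) +
       (x 2) * ((z₁ 0) * (z₂ 1) - (z₁ 1) * (z₂ 0))) * hB -
      ((x 0) * ((z₁ 1) * (z₂ 2) - (z₁ 2) * (z₂ 1)) +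
       (x 1) * ((z₁ 2) * (z₂ 0) - (z₁ 0) * (z₂ 2)) +
       (x 2) * ((z₁ 0) * (z₂ 1) - (z₁ 1) * (z₂ 0))) * hA
  · intro h
    rw [inner3] at h
    simp only [PiLp.sub_apply, cross3_0, cross3_1, cross3_2] at h
    rw [inner3] at hy₁ hy₂
    have hd1 : ⟪z₁, z₂⟫ < 1 := by
      have hn := norm_sub_sq_real z₁ z₂
      have hp : 0 < ‖z₁ - z₂‖ := norm_pos_iff.mpr (sub_ne_zero.mpr hne)
      rw [hz₁, hz₂] at hn
      nlinarith [hp, hn]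
    have hd2 : -1 < ⟪z₁, z₂⟫ := by
      have hn := norm_add_sq_real z₁ z₂
      have hp : 0 < ‖z₁ + z₂‖ := by
        refine norm_pos_iff.mpr ?_
        intro h0
        exact hne' (by linear_combination (norm := module) h0)
      rw [hz₁, hz₂] at hn
      nlinarith [hp, hn]
    rw [inner3] at hd1 hd2
    obtain ⟨x0, x1, x2, h1, h2⟩ :=
      key (z₁ 0) (z₁ 1) (z₁ 2) (z₂ 0) (z₂ 1) (z₂ 2) (y₁ 0) (y₁ 1) (y₁ 2)
        (y₂ 0) (y₂ 1) (y₂ 2) hA hB hy₁ hy₂ hd1 hd2 (by linear_combination h)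
    refine ⟨(EuclideanSpace.equiv (Fin 3) ℝ).symm ![x0, x1, x2], ?_, ?_⟩
    · ext i
      fin_cases i
      · exact h1.1
      · exact h1.2.1
      · exact h1.2.2
    · ext i
      fin_cases i
      · exact h2.1
      · exact h2.2.1
      · exact h2.2.2
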